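/- Let X, Y and V, W be two interpolation couples, θ ∈ (0,1), p ∈ [1,∞], and let T : X+Y → V+W be a linear operator whose restrictions T|_X : X → V and T|_Y : Y → W are bounded. Then the restriction of T to (X,Y)_{θ,p} is a bounded operator into (V,W)_{θ,p} with operator norm at most ‖T|_X‖^{1-θ} · ‖T|_Y‖^θ. -/

import Mathlib

open MeasureTheory ENNReal

noncomputable section

/-- An interpolation couple: two Banach spaces `X`, `Y` continuously and injectively
embedded into a common Hausdorff topological vector space `Z`. -/
structure InterpCouple (X Y Z : Type*) [NormedAddCommGroup X] [NormedSpace ℝ X]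
    [NormedAddCommGroup Y] [NormedSpace ℝ Y]
    [AddCommGroup Z] [Module ℝ Z] [TopologicalSpace Z] where
  iX : X →ₗ[ℝ] Z
  iY : Y →ₗ[ℝ] Z
  injX : Function.Injective iX
  injY : Function.Injective iY
  contX : Continuous iX
  contY : Continuous iY

namespace InterpCouple

variable {X Y Z : Type*} [NormedAddCommGroup X] [NormedSpace ℝ X]
  [NormedAddCommGroup Y] [NormedSpace ℝ Y]
  [AddCommGroup Z] [Module ℝ Z] [TopologicalSpace Z]
  (C : InterpCouple X Y Z)

/-- The sum space `X + Y`, as a subset of `Z`. -/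
def sum : Set Z := {z | ∃ a b, z = C.iX a + C.iY b}

/-- The norm of `X + Y`. -/
def sumNorm (z : Z) : ℝ :=
  sInf {r | ∃ a b, z = C.iX a + C.iY b ∧ r = ‖a‖ + ‖b‖}

/-- The intersection `X ∩ Y`, as a subset of `Z`. -/
def inter : Set Z := {z | (∃ a, C.iX a = z) ∧ ∃ b, C.iY b = z}

/-- The norm of `X ∩ Y`. -/
def interNorm (z : Z) : ℝ :=
  sInf {r | ∃ a b, C.iX a = z ∧ C.iY b = z ∧ r = max ‖a‖ ‖b‖}

/-- The `K`-functional of the couple. -/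
def K (t : ℝ) (z : Z) : ℝ :=
  sInf {r | ∃ a b, z = C.iX a + C.iY b ∧ r = ‖a‖ + t * ‖b‖}

/-- The measure `dt/t` on `(0,∞)`. -/
def mustar : Measure ℝ :=
  (volume.restrict (Set.Ioi (0:ℝ))).withDensity fun t => ENNReal.ofReal t⁻¹

/-- The norm `‖t^{-θ} K(t,x)‖_{L^p((0,∞),dt/t)}` of the interpolation space `(X,Y)_{θ,p}`. -/
def interpNorm (θ : ℝ) (p : ℝ≥0∞) (z : Z) : ℝ≥0∞ :=
  eLpNorm (fun t : ℝ => t ^ (-θ) * C.K t z) p mustar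

/-- The interpolation space `(X,Y)_{θ,p}`, as a subset of `Z`. -/
def interpSet (θ : ℝ) (p : ℝ≥0∞) : Set Z :=
  {z ∈ C.sum | C.interpNorm θ p z < ⊤}

/-- The swapped couple `Y, X`. -/
def swap : InterpCouple Y X Z where
  iX := C.iY
  iY := C.iX
  injX := C.injY
  injY := C.injX
  contX := C.contY
  contY := C.contX

end InterpCouple

namespace InterpAux

open InterpCouple

lemma mustar_apply {s : Set ℝ} (hs : MeasurableSet s) :
    mustar s = ∫⁻ t in s ∩ Set.Ioi 0, ENNReal.ofReal t⁻¹ := by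
  rw [mustar, withDensity_apply _ hs, Measure.restrict_restrict hs]

lemma mustar_ae_pos : ∀ᵐ t ∂mustar, 0 < t :=
  (withDensity_absolutelyContinuous _ _).ae_le (ae_restrict_mem measurableSet_Ioi)

lemma rpow_neg_one_fun : (fun t : ℝ => t ^ (-1 : ℝ)) = fun t : ℝ => t⁻¹ := by
  funext t
  rw [show (-1 : ℝ) = ((-1 : ℤ) : ℝ) by norm_num, Real.rpow_intCast, zpow_neg_one]

lemma lintegral_inv_top {s : Set ℝ} (hs : MeasurableSet s) (hsub : s ⊆ Set.Ioi 0)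
    (h : ¬ IntegrableOn (fun t : ℝ => t⁻¹) s) :
    ∫⁻ t in s, ENNReal.ofReal t⁻¹ = ⊤ := by
  by_contra hfin
  apply h
  refine ⟨measurable_inv.aestronglyMeasurable, ?_⟩
  rw [hasFiniteIntegral_iff_ofReal ?_]
  · exact lt_top_iff_ne_top.2 hfin
  · filter_upwards [ae_restrict_mem hs] with t ht
    exact inv_nonneg.2 (le_of_lt (hsub ht))

lemma mustar_Ioc_top {δ : ℝ} (hδ : 0 < δ) : mustar (Set.Ioc 0 δ) = ⊤ := by
  rw [mustar_apply measurableSet_Ioc]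
  have hin : Set.Ioc (0:ℝ) δ ∩ Set.Ioi 0 = Set.Ioc 0 δ :=
    Set.inter_eq_left.2 fun t ht => ht.1
  rw [hin]
  apply lintegral_inv_top measurableSet_Ioc (fun t ht => ht.1)
  intro h
  have h2 : IntegrableOn (fun t : ℝ => t ^ (-1 : ℝ)) (Set.Ioo 0 δ) := by
    rw [rpow_neg_one_fun]
    exact h.mono Set.Ioo_subset_Ioc_self le_rfl
  rw [intervalIntegral.integrableOn_Ioo_rpow_iff hδ] at h2
  linarith

lemma mustar_Ioi_top {T : ℝ} (hT : 0 < T) : mustar (Set.Ioi T) = ⊤ := by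
  rw [mustar_apply measurableSet_Ioi]
  have hin : Set.Ioi T ∩ Set.Ioi (0:ℝ) = Set.Ioi T :=
    Set.inter_eq_left.2 (Set.Ioi_subset_Ioi hT.le)
  rw [hin]
  apply lintegral_inv_top measurableSet_Ioi (Set.Ioi_subset_Ioi hT.le)
  intro h
  have h2 : IntegrableOn (fun t : ℝ => t ^ (-1 : ℝ)) (Set.Ioi T) := by
    rw [rpow_neg_one_fun]; exact h
  rw [integrableOn_Ioi_rpow_iff hT] at h2
  linarith

lemma eLpNorm_eq_top (f : ℝ → ℝ) {p : ℝ≥0∞} (hp : p ≠ 0) (μ : Measure ℝ)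
    (h : ∀ M : ℝ, 0 < M → ∃ s : Set ℝ, MeasurableSet s ∧ μ s = ⊤ ∧ ∀ t ∈ s, M ≤ f t) :
    eLpNorm f p μ = ⊤ := by
  rcases eq_or_ne p ⊤ with hp' | hp'
  · subst hp'
    rw [eLpNorm_exponent_top]
    by_contra hne
    set e := eLpNormEssSup f μ with he
    have hefin : e ≠ ⊤ := hne
    obtain ⟨s, hsm, hs, hfs⟩ := h (e.toReal + 1) (by positivity)
    have hnull : μ {t | ¬ ((‖f t‖₊ : ℝ≥0∞) ≤ e)} = 0 := by
      have hae : ∀ᵐ t ∂μ, (‖f t‖₊ : ℝ≥0∞) ≤ e := ENNReal.ae_le_essSup _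
      exact ae_iff.1 hae
    have hsub : s ⊆ {t | ¬ ((‖f t‖₊ : ℝ≥0∞) ≤ e)} := by
      intro t ht hle
      have h1 : ENNReal.ofReal (e.toReal + 1) ≤ (‖f t‖₊ : ℝ≥0∞) := by
        rw [← enorm_eq_nnnorm, ← ofReal_norm]
        exact ENNReal.ofReal_le_ofReal ((hfs t ht).trans (le_abs_self _))
      have h2 : e < ENNReal.ofReal (e.toReal + 1) := by
        conv_lhs => rw [← ENNReal.ofReal_toReal hefin]
        exact ENNReal.ofReal_lt_ofReal_iff (by positivity) |>.2 (by linarith)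
      exact absurd (h1.trans hle) (not_le.2 h2)
    rw [measure_mono_null hsub hnull] at hs
    exact top_ne_zero hs.symm
  · rw [eLpNorm_eq_eLpNorm' hp hp', eLpNorm']
    have hq : 0 < p.toReal := ENNReal.toReal_pos hp hp'
    obtain ⟨s, hsm, hs, hfs⟩ := h 1 one_pos
    have hint : ∫⁻ t, (‖f t‖₊ : ℝ≥0∞) ^ p.toReal ∂μ = ⊤ := by
      rw [eq_top_iff]
      calc (⊤ : ℝ≥0∞) = μ s := hs.symm
        _ = ∫⁻ _ in s, 1 ∂μ := (setLIntegral_one s).symm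
        _ ≤ ∫⁻ t in s, (‖f t‖₊ : ℝ≥0∞) ^ p.toReal ∂μ := by
            refine lintegral_mono_ae ?_
            filter_upwards [ae_restrict_mem hsm] with t ht
            have h1 : (1 : ℝ≥0∞) ≤ (‖f t‖₊ : ℝ≥0∞) := by
              rw [← enorm_eq_nnnorm, ← ofReal_norm, ← ENNReal.ofReal_one]
              exact ENNReal.ofReal_le_ofReal ((hfs t ht).trans (le_abs_self _))
            calc (1 : ℝ≥0∞) = 1 ^ p.toReal := (ENNReal.one_rpow _).symm
              _ ≤ _ := ENNReal.rpow_le_rpow h1 hq.le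
        _ ≤ _ := setLIntegral_le_lintegral s _
    rw [show (∫⁻ a, ‖f a‖ₑ ^ p.toReal ∂μ) = ⊤ from hint]
    exact ENNReal.top_rpow_of_pos (by positivity)

lemma mustar_map_mul {l : ℝ} (hl : 0 < l) :
    Measure.map (fun t => l * t) mustar = mustar := by
  ext s hs
  have hmul : Measurable (fun t : ℝ => l * t) := measurable_const_mul l
  rw [Measure.map_apply hmul hs, mustar_apply (hmul hs), mustar_apply hs]
  have hvol : (volume : Measure ℝ) = ENNReal.ofReal l • Measure.map (fun x : ℝ => l * x) volume := by
    have h := Real.smul_map_volume_mul_left (a := l) hl.ne'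
    rw [abs_of_pos hl] at h
    exact h.symm
  have hpre : (fun t : ℝ => l * t) ⁻¹' (s ∩ Set.Ioi 0) =
      ((fun t : ℝ => l * t) ⁻¹' s) ∩ Set.Ioi 0 := by
    rw [Set.preimage_inter, Set.preimage_const_mul_Ioi₀ _ hl, zero_div]
  have hmeas : Measurable (fun t : ℝ => ENNReal.ofReal t⁻¹) :=
    ENNReal.measurable_ofReal.comp measurable_inv
  calc ∫⁻ t in (fun t : ℝ => l * t) ⁻¹' s ∩ Set.Ioi 0, ENNReal.ofReal t⁻¹
      = ∫⁻ t in (fun t : ℝ => l * t) ⁻¹' s ∩ Set.Ioi 0,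
          ENNReal.ofReal l * ENNReal.ofReal (l * t)⁻¹ := by
        refine setLIntegral_congr_fun ((hmul hs).inter measurableSet_Ioi) ?_
        intro t ht
        dsimp only
        rw [← ENNReal.ofReal_mul hl.le, mul_inv, ← mul_assoc, mul_inv_cancel₀ hl.ne', one_mul]
    _ = ENNReal.ofReal l * ∫⁻ t in (fun t : ℝ => l * t) ⁻¹' (s ∩ Set.Ioi 0),
          ENNReal.ofReal (l * t)⁻¹ := by
        rw [hpre, lintegral_const_mul' _ _ ENNReal.ofReal_ne_top]
    _ = ENNReal.ofReal l * ∫⁻ t in s ∩ Set.Ioi 0, ENNReal.ofReal t⁻¹ ∂(Measure.map (l * ·) volume) := by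
        rw [setLIntegral_map (hs.inter measurableSet_Ioi) hmeas hmul]
    _ = ∫⁻ t in s ∩ Set.Ioi 0, ENNReal.ofReal t⁻¹ := by
        rw [← smul_eq_mul, ← lintegral_smul_measure, ← Measure.restrict_smul, ← hvol]

lemma eLpNorm_comp_mul {l : ℝ} (hl : 0 < l) (g : ℝ → ℝ) (p : ℝ≥0∞)
    (hg : AEStronglyMeasurable g mustar) :
    eLpNorm (fun t => g (l * t)) p mustar = eLpNorm g p mustar := by
  conv_rhs => rw [← mustar_map_mul hl]
  rw [eLpNorm_map_measure (by rw [mustar_map_mul hl]; exact hg)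
    (measurable_const_mul l).aemeasurable]
  rfl

lemma le_mul_csInf {m c : ℝ} (hc : 0 < c) {S : Set ℝ} (hS : S.Nonempty)
    (h : ∀ r ∈ S, m ≤ c * r) : m ≤ c * sInf S := by
  have h1 : m / c ≤ sInf S :=
    le_csInf hS fun r hr => (div_le_iff₀ hc).2 (by rw [mul_comm]; exact h r hr)
  calc m = c * (m / c) := by field_simp
    _ ≤ c * sInf S := mul_le_mul_of_nonneg_left h1 hc.le

end InterpAux

section KAux

variable {X Y Z : Type*} [NormedAddCommGroup X] [NormedSpace ℝ X]
  [NormedAddCommGroup Y] [NormedSpace ℝ Y]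
  [AddCommGroup Z] [Module ℝ Z] [TopologicalSpace Z]
  (C : InterpCouple X Y Z)

open InterpCouple InterpAux

lemma K_nonneg' {t : ℝ} (ht : 0 ≤ t) (z : Z) : 0 ≤ C.K t z := by
  apply Real.sInf_nonneg
  rintro r ⟨a, b, -, rfl⟩
  positivity

lemma K_bddBelow' {t : ℝ} (ht : 0 ≤ t) (z : Z) :
    BddBelow {r | ∃ a b, z = C.iX a + C.iY b ∧ r = ‖a‖ + t * ‖b‖} :=
  ⟨0, by rintro r ⟨a, b, -, rfl⟩; positivity⟩

lemma K_le' {z : Z} {t : ℝ} (ht : 0 ≤ t) (a : X) (b : Y) (hz : z = C.iX a + C.iY b) :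
    C.K t z ≤ ‖a‖ + t * ‖b‖ :=
  csInf_le (K_bddBelow' C ht z) ⟨a, b, hz, rfl⟩

lemma K_monotoneOn' (z : Z) : MonotoneOn (fun t => C.K t z) (Set.Ici 0) := by
  intro t₁ ht₁ t₂ ht₂ h
  by_cases hz : ∃ a b, z = C.iX a + C.iY b
  · obtain ⟨a₀, b₀, h₀⟩ := hz
    refine le_csInf ⟨_, a₀, b₀, h₀, rfl⟩ ?_
    rintro r ⟨a, b, hab, rfl⟩
    calc C.K t₁ z ≤ ‖a‖ + t₁ * ‖b‖ := K_le' C ht₁ a b hab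
      _ ≤ ‖a‖ + t₂ * ‖b‖ := by nlinarith [norm_nonneg b]
  · have h1 : ∀ t : ℝ, {r | ∃ a b, z = C.iX a + C.iY b ∧ r = ‖a‖ + t * ‖b‖} = (∅ : Set ℝ) := by
      intro t
      ext r
      simp only [Set.mem_setOf_eq, Set.mem_empty_iff_false, iff_false]
      rintro ⟨a, b, hab, -⟩
      exact hz ⟨a, b, hab⟩
    show C.K t₁ z ≤ C.K t₂ z
    rw [InterpCouple.K, InterpCouple.K, h1, h1]

lemma interp_aesm (θ : ℝ) (z : Z) :
    AEStronglyMeasurable (fun t : ℝ => t ^ (-θ) * C.K t z) mustar := by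
  have hK : Measurable (fun t : ℝ => C.K (max t 0) z) := by
    apply Monotone.measurable
    intro t₁ t₂ h
    exact K_monotoneOn' C z (Set.mem_Ici.2 (le_max_right t₁ 0))
      (Set.mem_Ici.2 (le_max_right t₂ 0)) (max_le_max h le_rfl)
  have hm : Measurable fun t : ℝ => t ^ (-θ) * C.K (max t 0) z :=
    (by fun_prop : Measurable fun t : ℝ => t ^ (-θ)).mul hK
  refine hm.aestronglyMeasurable.congr ?_
  filter_upwards [mustar_ae_pos] with t ht
  rw [max_eq_left ht.le]

lemma K_small {θ : ℝ} (hθ : θ ∈ Set.Ioo (0:ℝ) 1) {p : ℝ≥0∞} (hp : p ≠ 0) {z : Z}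
    (hz : C.interpNorm θ p z < ⊤) {ε : ℝ} (hε : 0 < ε) : ∃ t, 0 < t ∧ C.K t z < ε := by
  by_contra hcon
  push_neg at hcon
  have htop : C.interpNorm θ p z = ⊤ := by
    apply eLpNorm_eq_top _ hp
    intro M hM
    refine ⟨Set.Ioc 0 ((ε / M) ^ (1/θ)), measurableSet_Ioc,
      mustar_Ioc_top (by positivity), ?_⟩
    rintro t ⟨ht0, htδ⟩
    have hKt : ε ≤ C.K t z := hcon t ht0
    have h1 : t ^ θ ≤ ε / M := by
      calc t ^ θ ≤ ((ε / M) ^ (1/θ)) ^ θ := Real.rpow_le_rpow ht0.le htδ hθ.1.le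
        _ = ε / M := by
          rw [← Real.rpow_mul (by positivity), one_div, inv_mul_cancel₀ hθ.1.ne',
            Real.rpow_one]
    have h2 : M / ε ≤ t ^ (-θ) := by
      rw [Real.rpow_neg ht0.le, ← inv_div ε M]
      exact inv_anti₀ (Real.rpow_pos_of_pos ht0 θ) h1
    calc M = M / ε * ε := by field_simp
      _ ≤ t ^ (-θ) * C.K t z :=
        mul_le_mul h2 hKt hε.le (le_trans (by positivity) h2)
  exact absurd htop hz.ne

lemma K_div_small {θ : ℝ} (hθ : θ ∈ Set.Ioo (0:ℝ) 1) {p : ℝ≥0∞} (hp : p ≠ 0) {z : Z}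
    (hz : C.interpNorm θ p z < ⊤) {ε : ℝ} (hε : 0 < ε) : ∃ t, 0 < t ∧ C.K t z < ε * t := by
  by_contra hcon
  push_neg at hcon
  have h1θ : (0:ℝ) < 1 - θ := by linarith [hθ.2]
  have htop : C.interpNorm θ p z = ⊤ := by
    apply eLpNorm_eq_top _ hp
    intro M hM
    set T := max 1 ((M / ε) ^ (1/(1-θ))) with hT
    have hT1 : (1:ℝ) ≤ T := le_max_left _ _
    refine ⟨Set.Ioi T, measurableSet_Ioi, mustar_Ioi_top (by linarith), ?_⟩
    intro t ht
    have ht' : T < t := ht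
    have ht0 : (0:ℝ) < t := by linarith
    have hKt : ε * t ≤ C.K t z := hcon t ht0
    have h1 : M / ε ≤ t ^ (1 - θ) := by
      calc M / ε = ((M / ε) ^ (1/(1-θ))) ^ (1-θ) := by
            rw [← Real.rpow_mul (by positivity), one_div,
              inv_mul_cancel₀ h1θ.ne', Real.rpow_one]
        _ ≤ t ^ (1-θ) := Real.rpow_le_rpow (by positivity)
            (le_trans (le_max_right _ _) ht'.le) h1θ.le
    have h2 : t ^ (-θ) * t = t ^ (1-θ) := by
      rw [← Real.rpow_add_one ht0.ne' (-θ), neg_add_eq_sub]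
    calc M = ε * (M / ε) := by field_simp
      _ ≤ ε * t ^ (1-θ) := mul_le_mul_of_nonneg_left h1 hε.le
      _ = t ^ (-θ) * (ε * t) := by rw [← h2]; ring
      _ ≤ t ^ (-θ) * C.K t z :=
        mul_le_mul_of_nonneg_left hKt (Real.rpow_nonneg ht0.le _)
  exact absurd htop hz.ne

end KAux


/-- a linear operator `T : X + Y → V + W` whose restrictions `T|_X : X → V`
and `T|_Y : Y → W` are bounded (with bounds `c₁`, `c₂`) restricts to a bounded operator
`(X,Y)_{θ,p} → (V,W)_{θ,p}` with bound `c₁^{1-θ}·c₂^θ`. -/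
theorem interp_operator_bound {X Y Z V W Z' : Type*}
    [NormedAddCommGroup X] [NormedSpace ℝ X] [NormedAddCommGroup Y] [NormedSpace ℝ Y]
    [CompleteSpace X] [CompleteSpace Y]
    [AddCommGroup Z] [Module ℝ Z] [TopologicalSpace Z] [T2Space Z]
    [NormedAddCommGroup V] [NormedSpace ℝ V] [NormedAddCommGroup W] [NormedSpace ℝ W]
    [CompleteSpace V] [CompleteSpace W]
    [AddCommGroup Z'] [Module ℝ Z'] [TopologicalSpace Z'] [T2Space Z']
    (C : InterpCouple X Y Z) (C' : InterpCouple V W Z')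
    (θ : ℝ) (hθ : θ ∈ Set.Ioo (0:ℝ) 1) (p : ℝ≥0∞) (hp : 1 ≤ p)
    (Tmap : Z →ₗ[ℝ] Z') (TX : X →ₗ[ℝ] V) (TY : Y →ₗ[ℝ] W)
    (hTX : ∀ a, Tmap (C.iX a) = C'.iX (TX a)) (hTY : ∀ b, Tmap (C.iY b) = C'.iY (TY b))
    (c₁ c₂ : ℝ) (hc₁ : 0 ≤ c₁) (hc₂ : 0 ≤ c₂)
    (hTXb : ∀ a, ‖TX a‖ ≤ c₁ * ‖a‖) (hTYb : ∀ b, ‖TY b‖ ≤ c₂ * ‖b‖) :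
    ∀ z ∈ C.interpSet θ p, Tmap z ∈ C'.interpSet θ p ∧
      C'.interpNorm θ p (Tmap z)
        ≤ ENNReal.ofReal (c₁ ^ (1 - θ) * c₂ ^ θ) * C.interpNorm θ p z := by
  obtain ⟨hθ0, hθ1⟩ := hθ
  have hp0 : p ≠ 0 := by
    intro h
    rw [h] at hp
    exact absurd hp (by simp)
  intro z hz
  obtain ⟨⟨a₀, b₀, hz₀⟩, hzfin⟩ := hz
  have hTz : ∀ (a : X) (b : Y), z = C.iX a + C.iY b →
      Tmap z = C'.iX (TX a) + C'.iY (TY b) := by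
    intro a b hab
    rw [hab, map_add, hTX, hTY]
  have hTz_sum : Tmap z ∈ C'.sum := ⟨TX a₀, TY b₀, hTz a₀ b₀ hz₀⟩
  by_cases hdeg : c₁ = 0 ∨ c₂ = 0
  · -- degenerate case: the target norm is zero
    have hK0 : ∀ s : ℝ, 0 < s → C'.K s (Tmap z) = 0 := by
      intro s hs
      refine le_antisymm ?_ (K_nonneg' C' hs.le _)
      have hle : ∀ ε : ℝ, 0 < ε → C'.K s (Tmap z) ≤ ε := by
        intro ε hε
        rcases eq_or_lt_of_le hc₂ with hc₂0 | hc₂pos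
        · -- c₂ = 0
          rcases eq_or_lt_of_le hc₁ with hc₁0 | hc₁pos
          · -- c₁ = 0 as well
            have e1 := hTXb a₀
            have e2 := hTYb b₀
            rw [← hc₁0, zero_mul] at e1
            rw [← hc₂0, zero_mul] at e2
            have e3 := K_le' C' hs.le _ _ (hTz a₀ b₀ hz₀)
            have e5 : ‖TX a₀‖ = 0 := le_antisymm e1 (norm_nonneg _)
            have e6 : ‖TY b₀‖ = 0 := le_antisymm e2 (norm_nonneg _)
            rw [e5, e6, mul_zero, add_zero] at e3
            linarith
          · -- c₁ > 0
            obtain ⟨t, ht0, hKt⟩ := K_small C ⟨hθ0, hθ1⟩ hp0 hzfin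
              (show (0:ℝ) < ε / c₁ by positivity)
            have key : C'.K s (Tmap z) ≤ c₁ * C.K t z := by
              rw [InterpCouple.K]
              refine InterpAux.le_mul_csInf hc₁pos ⟨‖a₀‖ + t * ‖b₀‖, a₀, b₀, hz₀, rfl⟩ ?_
              rintro r ⟨a, b, hab, rfl⟩
              calc C'.K s (Tmap z) ≤ ‖TX a‖ + s * ‖TY b‖ :=
                  K_le' C' hs.le _ _ (hTz a b hab)
                _ ≤ c₁ * ‖a‖ + s * (c₂ * ‖b‖) :=
                  add_le_add (hTXb a) (mul_le_mul_of_nonneg_left (hTYb b) hs.le)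
                _ ≤ c₁ * (‖a‖ + t * ‖b‖) := by
                  rw [← hc₂0, zero_mul, mul_zero, add_zero]
                  nlinarith [mul_nonneg (mul_nonneg hc₁pos.le ht0.le) (norm_nonneg b)]
            calc C'.K s (Tmap z) ≤ c₁ * C.K t z := key
              _ ≤ c₁ * (ε / c₁) := mul_le_mul_of_nonneg_left hKt.le hc₁pos.le
              _ = ε := by field_simp
        · -- c₂ > 0, hence c₁ = 0
          have hc₁0 : c₁ = 0 := by
            rcases hdeg with h | h
            · exact h
            · exact absurd h hc₂pos.ne'
          obtain ⟨t, ht0, hKt⟩ := K_div_small C ⟨hθ0, hθ1⟩ hp0 hzfin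
            (show (0:ℝ) < ε / (s * c₂) by positivity)
          have key : C'.K s (Tmap z) ≤ s * c₂ / t * C.K t z := by
            rw [InterpCouple.K]
            refine InterpAux.le_mul_csInf (by positivity) ⟨‖a₀‖ + t * ‖b₀‖, a₀, b₀, hz₀, rfl⟩ ?_
            rintro r ⟨a, b, hab, rfl⟩
            have h3 : s * c₂ / t * t = s * c₂ := by field_simp
            calc C'.K s (Tmap z) ≤ ‖TX a‖ + s * ‖TY b‖ :=
                K_le' C' hs.le _ _ (hTz a b hab)
              _ ≤ c₁ * ‖a‖ + s * (c₂ * ‖b‖) :=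
                add_le_add (hTXb a) (mul_le_mul_of_nonneg_left (hTYb b) hs.le)
              _ ≤ s * c₂ / t * (‖a‖ + t * ‖b‖) := by
                rw [hc₁0, zero_mul, zero_add]
                have h4 : 0 ≤ s * c₂ / t := by positivity
                have h5 : s * c₂ / t * (‖a‖ + t * ‖b‖)
                    = s * c₂ / t * ‖a‖ + s * c₂ * ‖b‖ := by
                  field_simp
                rw [h5]
                nlinarith [mul_nonneg h4 (norm_nonneg a)]
          calc C'.K s (Tmap z) ≤ s * c₂ / t * C.K t z := key
            _ ≤ s * c₂ / t * (ε / (s * c₂) * t) :=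
              mul_le_mul_of_nonneg_left hKt.le (by positivity)
            _ = ε := by field_simp
      by_contra hpos
      push_neg at hpos
      have := hle (C'.K s (Tmap z) / 2) (by linarith)
      linarith
    have hnorm0 : C'.interpNorm θ p (Tmap z) = 0 := by
      have hae : (fun t : ℝ => t ^ (-θ) * C'.K t (Tmap z)) =ᵐ[InterpCouple.mustar]
          (0 : ℝ → ℝ) := by
        filter_upwards [InterpAux.mustar_ae_pos] with t ht
        simp [hK0 t ht]
      show eLpNorm (fun t : ℝ => t ^ (-θ) * C'.K t (Tmap z)) p InterpCouple.mustar = 0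
      rw [eLpNorm_congr_ae hae, eLpNorm_zero]
    refine ⟨⟨hTz_sum, ?_⟩, ?_⟩
    · show C'.interpNorm θ p (Tmap z) < ⊤
      rw [hnorm0]
      exact ENNReal.zero_lt_top
    · rw [hnorm0]
      exact bot_le
  · -- main case: c₁ > 0 and c₂ > 0
    push_neg at hdeg
    have hc₁pos : 0 < c₁ := lt_of_le_of_ne hc₁ (Ne.symm hdeg.1)
    have hc₂pos : 0 < c₂ := lt_of_le_of_ne hc₂ (Ne.symm hdeg.2)
    set l := c₂ / c₁ with hl
    have hlpos : 0 < l := by positivity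
    set cc := c₁ ^ (1-θ) * c₂ ^ θ with hcc
    have hccpos : 0 < cc := by
      rw [hcc]; positivity
    have hckey : ∀ t : ℝ, 0 < t → t ^ (-θ) * c₁ = cc * (l * t) ^ (-θ) := by
      intro t ht
      have e1 : l ^ (-θ) = c₂ ^ (-θ) * c₁ ^ θ := by
        rw [hl, div_eq_mul_inv, Real.mul_rpow hc₂pos.le (inv_nonneg.2 hc₁pos.le),
          Real.inv_rpow hc₁pos.le, Real.rpow_neg hc₁pos.le, inv_inv]
      have e2 : c₂ ^ θ * c₂ ^ (-θ) = 1 := by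
        rw [← Real.rpow_add hc₂pos]; simp
      have e3 : c₁ ^ (1-θ) * c₁ ^ θ = c₁ := by
        rw [← Real.rpow_add hc₁pos]; simp
      have e4 : cc * l ^ (-θ) = c₁ := by
        calc cc * l ^ (-θ) = c₁ ^ (1-θ) * c₁ ^ θ * (c₂ ^ θ * c₂ ^ (-θ)) := by
              rw [e1, hcc]; ring
          _ = c₁ := by rw [e2, e3, mul_one]
      rw [Real.mul_rpow hlpos.le ht.le, ← mul_assoc, e4, mul_comm]
    have hKbound : ∀ t : ℝ, 0 < t → C'.K t (Tmap z) ≤ c₁ * C.K (l * t) z := by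
      intro t ht
      rw [InterpCouple.K]
      refine InterpAux.le_mul_csInf hc₁pos ⟨‖a₀‖ + l * t * ‖b₀‖, a₀, b₀, hz₀, rfl⟩ ?_
      rintro r ⟨a, b, hab, rfl⟩
      calc C'.K t (Tmap z) ≤ ‖TX a‖ + t * ‖TY b‖ :=
          K_le' C' ht.le _ _ (hTz a b hab)
        _ ≤ c₁ * ‖a‖ + t * (c₂ * ‖b‖) :=
          add_le_add (hTXb a) (mul_le_mul_of_nonneg_left (hTYb b) ht.le)
        _ = c₁ * (‖a‖ + l * t * ‖b‖) := by
          rw [hl]; field_simp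
    have hmain : C'.interpNorm θ p (Tmap z) ≤ ENNReal.ofReal cc * C.interpNorm θ p z := by
      have hb : C'.interpNorm θ p (Tmap z)
          ≤ eLpNorm (fun t : ℝ => cc * ((l*t) ^ (-θ) * C.K (l*t) z)) p InterpCouple.mustar := by
        apply eLpNorm_mono_ae
        filter_upwards [InterpAux.mustar_ae_pos] with t ht
        have hnn1 : 0 ≤ t ^ (-θ) * C'.K t (Tmap z) :=
          mul_nonneg (Real.rpow_nonneg ht.le _) (K_nonneg' C' ht.le _)
        have hKnn : 0 ≤ C.K (l*t) z := K_nonneg' C (by positivity) z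
        have hnn2 : 0 ≤ cc * ((l*t) ^ (-θ) * C.K (l*t) z) := by
          have h5 : (0:ℝ) ≤ (l*t) ^ (-θ) := Real.rpow_nonneg (by positivity) _
          positivity
        rw [Real.norm_eq_abs, Real.norm_eq_abs, abs_of_nonneg hnn1, abs_of_nonneg hnn2]
        calc t ^ (-θ) * C'.K t (Tmap z) ≤ t ^ (-θ) * (c₁ * C.K (l*t) z) :=
            mul_le_mul_of_nonneg_left (hKbound t ht) (Real.rpow_nonneg ht.le _)
          _ = cc * ((l*t) ^ (-θ) * C.K (l*t) z) := by
            rw [← mul_assoc, hckey t ht, mul_assoc]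
      have heq : eLpNorm (fun t : ℝ => cc * ((l*t) ^ (-θ) * C.K (l*t) z)) p InterpCouple.mustar
          = ENNReal.ofReal cc * C.interpNorm θ p z := by
        have h1 : (fun t : ℝ => cc * ((l*t) ^ (-θ) * C.K (l*t) z))
            = cc • (fun t : ℝ => (l*t) ^ (-θ) * C.K (l*t) z) := rfl
        rw [h1, eLpNorm_const_smul]
        congr 1
        · exact Real.enorm_eq_ofReal hccpos.le
        · exact InterpAux.eLpNorm_comp_mul hlpos (fun s => s ^ (-θ) * C.K s z) p
            (interp_aesm C θ z)
      exact hb.trans (le_of_eq heq)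
    refine ⟨⟨hTz_sum, lt_of_le_of_lt hmain ?_⟩, hmain⟩
    exact ENNReal.mul_lt_top ENNReal.ofReal_lt_top hzfin
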